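/- Let (M, μ) be a measure space with μ a finite measure. For i = 1, 2 let ρ_i : M×𝕋 → [0,∞) and v_i : M×𝕋 → ℝ be bounded measurable functions, and define the measures g_i on 𝕋×ℝ by ∫φ dg_i = ∫_M ∫_𝕋 ρ_i^θ(x) φ(x, v_i^θ(x)) dx dμ(θ) (where ρ_i^θ := ρ_i(θ,·), v_i^θ := v_i(θ,·)). Assume equal total masses: ∫_M ∫_𝕋 ρ_1^θ(x) dx dμ(θ) = ∫_M ∫_𝕋 ρ_2^θ(x) dx dμ(θ) < ∞. Then W₁(g₁, g₂) ≤ (sup_{θ∈M} ‖ρ_1^θ‖_{L^∞(𝕋)}) · ∫_M ‖v_1^θ − v_2^θ‖_{L^∞(𝕋)} dμ(θ) + (1/2 + sup_{θ∈M} ‖v_2^θ‖_{L^∞(𝕋)}) · ∫_M ‖ρ_1^θ − ρ_2^θ‖_{L^∞(𝕋)} dμ(θ). -/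

import Mathlib

open MeasureTheory Real Filter Topology

noncomputable section

abbrev 𝕋 := AddCircle (1 : ℝ)

/-- The 1-Wasserstein (Kantorovich–Rubinstein) distance via the dual formulation. -/
noncomputable def W1 (μ ν : Measure (𝕋 × ℝ)) : ℝ :=
  sSup {r : ℝ | ∃ φ : 𝕋 × ℝ → ℝ, LipschitzWith 1 φ ∧
    r = (∫ p, φ p ∂μ) - ∫ p, φ p ∂ν}

/-- The measure on 𝕋 × ℝ acting on test functions by
φ ↦ ∫_M ∫_𝕋 ρ(θ,x) φ(x, v(θ,x)) dx dμ(θ). -/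
noncomputable def fiberedMeasure {M : Type*} [MeasurableSpace M] (μ : Measure M)
    (ρ v : M → 𝕋 → ℝ) : Measure (𝕋 × ℝ) :=
  ((μ.prod (volume : Measure 𝕋)).withDensity
      (fun q => ENNReal.ofReal (ρ q.1 q.2))).map (fun q => (q.2, v q.1 q.2))

/-- Quantitative W₁ estimate between two superpositions of Dirac masses in velocity:
W₁(g₁, g₂) ≤ (sup_θ ‖ρ₁^θ‖_∞) ∫_M ‖v₁^θ − v₂^θ‖_∞ dμ(θ)
            + (1/2 + sup_θ ‖v₂^θ‖_∞) ∫_M ‖ρ₁^θ − ρ₂^θ‖_∞ dμ(θ). -/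
lemma fibered_integral {M : Type*} [MeasurableSpace M] (μ : Measure M)
    (ρ v : M → 𝕋 → ℝ) (hρ : Measurable (fun q : M × 𝕋 => ρ q.1 q.2))
    (hv : Measurable (fun q : M × 𝕋 => v q.1 q.2))
    (hρnn : ∀ θ x, 0 ≤ ρ θ x)
    (φ : 𝕋 × ℝ → ℝ) (hφ : Continuous φ) :
    ∫ p, φ p ∂(fiberedMeasure μ ρ v)
      = ∫ q, ρ q.1 q.2 * φ (q.2, v q.1 q.2) ∂(μ.prod (volume : Measure 𝕋)) := by
  rw [fiberedMeasure]
  have hmap : Measurable (fun q : M × 𝕋 => (q.2, v q.1 q.2)) :=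
    measurable_snd.prodMk hv
  rw [integral_map hmap.aemeasurable hφ.aestronglyMeasurable]
  have h1 : (fun q : M × 𝕋 => ENNReal.ofReal (ρ q.1 q.2))
       = fun q : M × 𝕋 => (((ρ q.1 q.2).toNNReal : NNReal) : ENNReal) := rfl
  rw [h1, integral_withDensity_eq_integral_smul hρ.real_toNNReal]
  congr 1; ext q
  rw [NNReal.smul_def, smul_eq_mul, Real.coe_toNNReal _ (hρnn _ _)]

theorem W1_fibered_estimate
    {M : Type*} [MeasurableSpace M] (μ : Measure M) [IsFiniteMeasure μ]
    (ρ₁ ρ₂ v₁ v₂ : M → 𝕋 → ℝ)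
    (hmeas : Measurable (fun q : M × 𝕋 => ρ₁ q.1 q.2) ∧
      Measurable (fun q : M × 𝕋 => ρ₂ q.1 q.2) ∧
      Measurable (fun q : M × 𝕋 => v₁ q.1 q.2) ∧
      Measurable (fun q : M × 𝕋 => v₂ q.1 q.2))
    (hnonneg : ∀ θ x, 0 ≤ ρ₁ θ x ∧ 0 ≤ ρ₂ θ x)
    (hbdd : ∃ B : ℝ, ∀ θ x,
      ρ₁ θ x ≤ B ∧ ρ₂ θ x ≤ B ∧ |v₁ θ x| ≤ B ∧ |v₂ θ x| ≤ B)
    (hmass : (∫ θ, ∫ x : 𝕋, ρ₁ θ x ∂(volume : Measure 𝕋) ∂μ)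
      = ∫ θ, ∫ x : 𝕋, ρ₂ θ x ∂(volume : Measure 𝕋) ∂μ)
    (hint_v : Integrable (fun θ => ⨆ x : 𝕋, |v₁ θ x - v₂ θ x|) μ)
    (hint_ρ : Integrable (fun θ => ⨆ x : 𝕋, |ρ₁ θ x - ρ₂ θ x|) μ) :
    W1 (fiberedMeasure μ ρ₁ v₁) (fiberedMeasure μ ρ₂ v₂)
      ≤ (⨆ θ : M, ⨆ x : 𝕋, |ρ₁ θ x|) * (∫ θ, (⨆ x : 𝕋, |v₁ θ x - v₂ θ x|) ∂μ)
        + (1/2 + ⨆ θ : M, ⨆ x : 𝕋, |v₂ θ x|)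
          * ∫ θ, (⨆ x : 𝕋, |ρ₁ θ x - ρ₂ θ x|) ∂μ := by
  obtain ⟨hm1, hm2, hm3, hm4⟩ := hmeas
  obtain ⟨B₀, hB₀⟩ := hbdd
  set B := max B₀ 0 with hBdef
  have hBnn : (0:ℝ) ≤ B := le_max_right _ _
  have hB : ∀ θ x, ρ₁ θ x ≤ B ∧ ρ₂ θ x ≤ B ∧ |v₁ θ x| ≤ B ∧ |v₂ θ x| ≤ B := fun θ x =>
    ⟨(hB₀ θ x).1.trans (le_max_left _ _), (hB₀ θ x).2.1.trans (le_max_left _ _),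
     (hB₀ θ x).2.2.1.trans (le_max_left _ _), (hB₀ θ x).2.2.2.trans (le_max_left _ _)⟩
  clear hB₀
  set A := (⨆ θ : M, ⨆ x : 𝕋, |ρ₁ θ x|) with hAdef
  set C := (⨆ θ : M, ⨆ x : 𝕋, |v₂ θ x|) with hCdef
  set sv := fun θ => ⨆ x : 𝕋, |v₁ θ x - v₂ θ x| with hsvdef
  set sρ := fun θ => ⨆ x : 𝕋, |ρ₁ θ x - ρ₂ θ x| with hsρdef
  -- nonnegativity
  have hsvnn : ∀ θ, 0 ≤ sv θ := fun θ => Real.iSup_nonneg (fun x => abs_nonneg _)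
  have hsρnn : ∀ θ, 0 ≤ sρ θ := fun θ => Real.iSup_nonneg (fun x => abs_nonneg _)
  have hAnn : 0 ≤ A := Real.iSup_nonneg (fun θ => Real.iSup_nonneg (fun x => abs_nonneg _))
  have hCnn : 0 ≤ C := Real.iSup_nonneg (fun θ => Real.iSup_nonneg (fun x => abs_nonneg _))
  -- bddAbove
  have bddρ1 : ∀ θ, BddAbove (Set.range fun x : 𝕋 => |ρ₁ θ x|) := fun θ =>
    ⟨B, by rintro y ⟨x, rfl⟩; simpa [abs_of_nonneg (hnonneg θ x).1] using (hB θ x).1⟩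
  have bddv2 : ∀ θ, BddAbove (Set.range fun x : 𝕋 => |v₂ θ x|) := fun θ =>
    ⟨B, by rintro y ⟨x, rfl⟩; simpa using (hB θ x).2.2.2⟩
  have bddsv : ∀ θ, BddAbove (Set.range fun x : 𝕋 => |v₁ θ x - v₂ θ x|) := fun θ =>
    ⟨2 * B, by rintro y ⟨x, rfl⟩
               calc |v₁ θ x - v₂ θ x| ≤ |v₁ θ x| + |v₂ θ x| := abs_sub _ _
                 _ ≤ 2 * B := by linarith [(hB θ x).2.2.1, (hB θ x).2.2.2]⟩
  have bddsρ : ∀ θ, BddAbove (Set.range fun x : 𝕋 => |ρ₁ θ x - ρ₂ θ x|) := fun θ =>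
    ⟨2 * B, by rintro y ⟨x, rfl⟩
               calc |ρ₁ θ x - ρ₂ θ x| ≤ |ρ₁ θ x| + |ρ₂ θ x| := abs_sub _ _
                 _ ≤ 2 * B := by
                    rw [abs_of_nonneg (hnonneg θ x).1, abs_of_nonneg (hnonneg θ x).2]
                    linarith [(hB θ x).1, (hB θ x).2.1]⟩
  have bddA : BddAbove (Set.range fun θ : M => ⨆ x : 𝕋, |ρ₁ θ x|) :=
    ⟨B, by rintro y ⟨θ, rfl⟩; exact ciSup_le fun x => by
            rw [abs_of_nonneg (hnonneg θ x).1]; exact (hB θ x).1⟩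
  have bddC : BddAbove (Set.range fun θ : M => ⨆ x : 𝕋, |v₂ θ x|) :=
    ⟨B, by rintro y ⟨θ, rfl⟩; exact ciSup_le fun x => (hB θ x).2.2.2⟩
  -- pointwise sup bounds
  have hρ1A : ∀ θ x, |ρ₁ θ x| ≤ A := fun θ x =>
    (le_ciSup (bddρ1 θ) x).trans (le_ciSup bddA θ)
  have hv2C : ∀ θ x, |v₂ θ x| ≤ C := fun θ x =>
    (le_ciSup (bddv2 θ) x).trans (le_ciSup bddC θ)
  have hsv_ge : ∀ θ x, |v₁ θ x - v₂ θ x| ≤ sv θ := fun θ x => le_ciSup (bddsv θ) x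
  have hsρ_ge : ∀ θ x, |ρ₁ θ x - ρ₂ θ x| ≤ sρ θ := fun θ x => le_ciSup (bddsρ θ) x
  have hRHSnn : 0 ≤ A * (∫ θ, sv θ ∂μ) + (1/2 + C) * ∫ θ, sρ θ ∂μ :=
    add_nonneg (mul_nonneg hAnn (integral_nonneg hsvnn))
      (mul_nonneg (by linarith) (integral_nonneg hsρnn))
  apply Real.sSup_le _ hRHSnn
  rintro r ⟨φ, hφ, rfl⟩
  have hφc : Continuous φ := hφ.continuous
  have hφdist : ∀ p q : 𝕋 × ℝ, |φ p - φ q| ≤ dist p q := fun p q => by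
    have := hφ.dist_le_mul p q
    rwa [Real.dist_eq, NNReal.coe_one, one_mul] at this
  set c := φ (0, 0) with hcdef
  -- distance bounds
  have hdistb : ∀ (x : 𝕋) (r D : ℝ), |r| ≤ D → |φ (x, r) - c| ≤ 1/2 + D := by
    intro x r D hr
    refine (hφdist (x, r) (0, 0)).trans ?_
    rw [Prod.dist_eq]
    apply max_le
    · have h1 : dist x (0 : 𝕋) ≤ |(1:ℝ)| / 2 := by
        rw [dist_zero_right]; exact AddCircle.norm_le_half_period 1 one_ne_zero
      have hD : 0 ≤ D := le_trans (abs_nonneg _) hr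
      rw [abs_one] at h1; linarith
    · rw [Real.dist_eq, sub_zero]; linarith
  -- measurability of composites
  have mφ1 : Measurable (fun q : M × 𝕋 => φ (q.2, v₁ q.1 q.2)) :=
    hφc.measurable.comp (measurable_snd.prodMk hm3)
  have mφ2 : Measurable (fun q : M × 𝕋 => φ (q.2, v₂ q.1 q.2)) :=
    hφc.measurable.comp (measurable_snd.prodMk hm4)
  -- integrability helper
  have key : ∀ {f : M × 𝕋 → ℝ}, Measurable f → ∀ K : ℝ, (∀ q, |f q| ≤ K) →
      Integrable f (μ.prod (volume : Measure 𝕋)) := by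
    intro f hf K hK
    exact Integrable.mono' (integrable_const K) hf.aestronglyMeasurable
      (ae_of_all _ fun q => by simpa [Real.norm_eq_abs] using hK q)
  have intρ1 : Integrable (fun q : M × 𝕋 => ρ₁ q.1 q.2) (μ.prod volume) :=
    key hm1 B (fun q => by rw [abs_of_nonneg (hnonneg q.1 q.2).1]; exact (hB q.1 q.2).1)
  have intρ2 : Integrable (fun q : M × 𝕋 => ρ₂ q.1 q.2) (μ.prod volume) :=
    key hm2 B (fun q => by rw [abs_of_nonneg (hnonneg q.1 q.2).2]; exact (hB q.1 q.2).2.1)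
  have hφv1b : ∀ q : M × 𝕋, |φ (q.2, v₁ q.1 q.2)| ≤ |c| + (1/2 + B) := fun q => by
    have := hdistb q.2 (v₁ q.1 q.2) B (hB q.1 q.2).2.2.1
    calc |φ (q.2, v₁ q.1 q.2)| = |(φ (q.2, v₁ q.1 q.2) - c) + c| := by ring_nf
      _ ≤ |φ (q.2, v₁ q.1 q.2) - c| + |c| := abs_add_le _ _
      _ ≤ |c| + (1/2 + B) := by linarith
  have hφv2b : ∀ q : M × 𝕋, |φ (q.2, v₂ q.1 q.2)| ≤ |c| + (1/2 + B) := fun q => by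
    have := hdistb q.2 (v₂ q.1 q.2) B (hB q.1 q.2).2.2.2
    calc |φ (q.2, v₂ q.1 q.2)| = |(φ (q.2, v₂ q.1 q.2) - c) + c| := by ring_nf
      _ ≤ |φ (q.2, v₂ q.1 q.2) - c| + |c| := abs_add_le _ _
      _ ≤ |c| + (1/2 + B) := by linarith
  have intF1 : Integrable (fun q : M × 𝕋 => ρ₁ q.1 q.2 * φ (q.2, v₁ q.1 q.2)) (μ.prod volume) :=
    key (hm1.mul mφ1) (B * (|c| + (1/2 + B))) (fun q => by
      rw [abs_mul]
      exact mul_le_mul (by rw [abs_of_nonneg (hnonneg q.1 q.2).1]; exact (hB q.1 q.2).1)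
        (hφv1b q) (abs_nonneg _) hBnn)
  have intF2 : Integrable (fun q : M × 𝕋 => ρ₂ q.1 q.2 * φ (q.2, v₂ q.1 q.2)) (μ.prod volume) :=
    key (hm2.mul mφ2) (B * (|c| + (1/2 + B))) (fun q => by
      rw [abs_mul]
      exact mul_le_mul (by rw [abs_of_nonneg (hnonneg q.1 q.2).2]; exact (hB q.1 q.2).2.1)
        (hφv2b q) (abs_nonneg _) hBnn)
  have intG1 : Integrable
      (fun q : M × 𝕋 => ρ₁ q.1 q.2 * (φ (q.2, v₁ q.1 q.2) - φ (q.2, v₂ q.1 q.2)))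
      (μ.prod volume) :=
    key (hm1.mul (mφ1.sub mφ2)) (B * (2 * (|c| + (1/2 + B)))) (fun q => by
      rw [abs_mul]
      refine mul_le_mul (by rw [abs_of_nonneg (hnonneg q.1 q.2).1]; exact (hB q.1 q.2).1)
        ?_ (abs_nonneg _) hBnn
      calc |φ (q.2, v₁ q.1 q.2) - φ (q.2, v₂ q.1 q.2)|
          ≤ |φ (q.2, v₁ q.1 q.2)| + |φ (q.2, v₂ q.1 q.2)| := abs_sub _ _
        _ ≤ 2 * (|c| + (1/2 + B)) := by linarith [hφv1b q, hφv2b q])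
  have intG2 : Integrable
      (fun q : M × 𝕋 => (ρ₁ q.1 q.2 - ρ₂ q.1 q.2) * (φ (q.2, v₂ q.1 q.2) - c))
      (μ.prod volume) :=
    key ((hm1.sub hm2).mul (mφ2.sub measurable_const)) ((2 * B) * (1/2 + B)) (fun q => by
      rw [abs_mul]
      refine mul_le_mul ?_ (hdistb q.2 _ B (hB q.1 q.2).2.2.2) (abs_nonneg _)
        (by linarith)
      calc |ρ₁ q.1 q.2 - ρ₂ q.1 q.2| ≤ |ρ₁ q.1 q.2| + |ρ₂ q.1 q.2| := abs_sub _ _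
        _ ≤ 2 * B := by
            rw [abs_of_nonneg (hnonneg q.1 q.2).1, abs_of_nonneg (hnonneg q.1 q.2).2]
            linarith [(hB q.1 q.2).1, (hB q.1 q.2).2.1])
  -- rewrite the integrals
  rw [fibered_integral μ ρ₁ v₁ hm1 hm3 (fun θ x => (hnonneg θ x).1) φ hφc,
      fibered_integral μ ρ₂ v₂ hm2 hm4 (fun θ x => (hnonneg θ x).2) φ hφc]
  -- mass equality on the product
  have hmassν : (∫ q, ρ₁ q.1 q.2 ∂(μ.prod (volume : Measure 𝕋)))
      = ∫ q, ρ₂ q.1 q.2 ∂(μ.prod (volume : Measure 𝕋)) := by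
    rw [integral_prod _ intρ1, integral_prod _ intρ2]; exact hmass
  -- split the difference
  have hsplit : (∫ q, ρ₁ q.1 q.2 * φ (q.2, v₁ q.1 q.2) ∂(μ.prod (volume : Measure 𝕋)))
      - ∫ q, ρ₂ q.1 q.2 * φ (q.2, v₂ q.1 q.2) ∂(μ.prod (volume : Measure 𝕋))
      = (∫ q, ρ₁ q.1 q.2 * (φ (q.2, v₁ q.1 q.2) - φ (q.2, v₂ q.1 q.2))
          ∂(μ.prod (volume : Measure 𝕋)))
        + ∫ q, (ρ₁ q.1 q.2 - ρ₂ q.1 q.2) * (φ (q.2, v₂ q.1 q.2) - c)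
          ∂(μ.prod (volume : Measure 𝕋)) := by
    have h1 : (∫ q, ρ₁ q.1 q.2 * φ (q.2, v₁ q.1 q.2) ∂(μ.prod (volume : Measure 𝕋)))
        - ∫ q, ρ₂ q.1 q.2 * φ (q.2, v₂ q.1 q.2) ∂(μ.prod (volume : Measure 𝕋))
        = ∫ q, (ρ₁ q.1 q.2 * (φ (q.2, v₁ q.1 q.2) - φ (q.2, v₂ q.1 q.2))
            + (ρ₁ q.1 q.2 - ρ₂ q.1 q.2) * (φ (q.2, v₂ q.1 q.2) - c)
            + c * (ρ₁ q.1 q.2 - ρ₂ q.1 q.2)) ∂(μ.prod (volume : Measure 𝕋)) := by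
      rw [← integral_sub intF1 intF2]
      congr 1; ext q; ring
    have iG12 : Integrable (fun q : M × 𝕋 =>
        ρ₁ q.1 q.2 * (φ (q.2, v₁ q.1 q.2) - φ (q.2, v₂ q.1 q.2))
          + (ρ₁ q.1 q.2 - ρ₂ q.1 q.2) * (φ (q.2, v₂ q.1 q.2) - c)) (μ.prod volume) :=
      intG1.add intG2
    have icρ : Integrable (fun q : M × 𝕋 => c * (ρ₁ q.1 q.2 - ρ₂ q.1 q.2)) (μ.prod volume) :=
      (intρ1.sub intρ2).const_mul c
    rw [h1, integral_add iG12 icρ, integral_add intG1 intG2, integral_const_mul,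
        integral_sub intρ1 intρ2]
    rw [hmassν]; ring
  rw [hsplit]
  -- volume of the torus is 1
  have hvol : ((volume : Measure 𝕋) Set.univ).toReal = 1 := by
    rw [AddCircle.measure_univ]; simp
  -- bound the first term
  have hbound1 : (∫ q, ρ₁ q.1 q.2 * (φ (q.2, v₁ q.1 q.2) - φ (q.2, v₂ q.1 q.2))
      ∂(μ.prod (volume : Measure 𝕋))) ≤ A * ∫ θ, sv θ ∂μ := by
    rw [integral_prod _ intG1]
    rw [show A * ∫ θ, sv θ ∂μ = ∫ θ, A * sv θ ∂μ from (integral_const_mul _ _).symm]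
    refine integral_mono_ae intG1.integral_prod_left (hint_v.const_mul A) ?_
    filter_upwards [intG1.prod_right_ae] with θ hθ
    have hpt : ∀ x : 𝕋, ρ₁ θ x * (φ (x, v₁ θ x) - φ (x, v₂ θ x)) ≤ A * sv θ := by
      intro x
      calc ρ₁ θ x * (φ (x, v₁ θ x) - φ (x, v₂ θ x))
          ≤ |ρ₁ θ x * (φ (x, v₁ θ x) - φ (x, v₂ θ x))| := le_abs_self _
        _ = |ρ₁ θ x| * |φ (x, v₁ θ x) - φ (x, v₂ θ x)| := abs_mul _ _
        _ ≤ A * sv θ := by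
            refine mul_le_mul (hρ1A θ x) ?_ (abs_nonneg _) hAnn
            refine le_trans ?_ (hsv_ge θ x)
            refine (hφdist (x, v₁ θ x) (x, v₂ θ x)).trans ?_
            rw [Prod.dist_eq, dist_self, Real.dist_eq]
            exact max_le (abs_nonneg _) le_rfl
    calc (∫ x : 𝕋, ρ₁ θ x * (φ (x, v₁ θ x) - φ (x, v₂ θ x)))
        ≤ ∫ _x : 𝕋, A * sv θ := integral_mono hθ (integrable_const _) hpt
      _ = A * sv θ := by rw [integral_const, measureReal_def, hvol, one_smul]
  -- bound the second term
  have hbound2 : (∫ q, (ρ₁ q.1 q.2 - ρ₂ q.1 q.2) * (φ (q.2, v₂ q.1 q.2) - c)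
      ∂(μ.prod (volume : Measure 𝕋))) ≤ (1/2 + C) * ∫ θ, sρ θ ∂μ := by
    rw [integral_prod _ intG2]
    rw [show (1/2 + C) * ∫ θ, sρ θ ∂μ = ∫ θ, (1/2 + C) * sρ θ ∂μ
        from (integral_const_mul _ _).symm]
    refine integral_mono_ae intG2.integral_prod_left (hint_ρ.const_mul _) ?_
    filter_upwards [intG2.prod_right_ae] with θ hθ
    have hpt : ∀ x : 𝕋, (ρ₁ θ x - ρ₂ θ x) * (φ (x, v₂ θ x) - c) ≤ (1/2 + C) * sρ θ := by
      intro x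
      calc (ρ₁ θ x - ρ₂ θ x) * (φ (x, v₂ θ x) - c)
          ≤ |(ρ₁ θ x - ρ₂ θ x) * (φ (x, v₂ θ x) - c)| := le_abs_self _
        _ = |ρ₁ θ x - ρ₂ θ x| * |φ (x, v₂ θ x) - c| := abs_mul _ _
        _ ≤ sρ θ * (1/2 + C) :=
            mul_le_mul (hsρ_ge θ x) (hdistb x _ C (hv2C θ x)) (abs_nonneg _) (hsρnn θ)
        _ = (1/2 + C) * sρ θ := mul_comm _ _
    calc (∫ x : 𝕋, (ρ₁ θ x - ρ₂ θ x) * (φ (x, v₂ θ x) - c))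
        ≤ ∫ _x : 𝕋, (1/2 + C) * sρ θ := integral_mono hθ (integrable_const _) hpt
      _ = (1/2 + C) * sρ θ := by rw [integral_const, measureReal_def, hvol, one_smul]
  linarith
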